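/- arXiv:math/0511425 — 2 statements merged into one kernel-verified Lean document; each statement's English description precedes it below -/
import Mathlib

section
/- For distinct words u, v ∈ {00, 010010} and any k ≥ 0, μ^k(v) is neither a proper prefix of u nor has u as a proper prefix; consequently no two distinct words of the form μ^p(u), μ^q(v) with u,v ∈ {00,010010} are such that one is a proper prefix of the other. -/
/-- The Thue-Morse morphism: μ(0)=01, μ(1)=10, with 0 = `false`, 1 = `true`. -/
def mu (w : List Bool) : List Bool := w.flatMap fun b => [b, !b]

/-- The set {00, 010010}. -/
def S : Set (List Bool) :=
  {[false, false], [false, true, false, false, true, false]}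

lemma mu_cons (b : Bool) (t : List Bool) : mu (b :: t) = b :: (!b) :: mu t := rfl

lemma mu_nil : mu [] = [] := rfl

lemma mu_len (w : List Bool) : (mu w).length = 2 * w.length := by
  induction w with
  | nil => rfl
  | cons a t ih => rw [mu_cons]; simp [ih]; omega

lemma mu_iter_len (k : ℕ) (w : List Bool) :
    (mu^[k] w).length = 2 ^ k * w.length := by
  induction k with
  | zero => simp
  | succ n ih => rw [Function.iterate_succ_apply', mu_len, ih, pow_succ]; ring

lemma mu_prefix {x y : List Bool} (h : mu x <+: mu y) : x <+: y := by
  induction x generalizing y with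
  | nil => exact List.nil_prefix
  | cons a t ih =>
    cases y with
    | nil => simp [mu_cons, mu_nil] at h
    | cons b s =>
      rw [mu_cons, mu_cons] at h
      obtain ⟨hab, h⟩ := List.cons_prefix_cons.mp h
      obtain ⟨-, h⟩ := List.cons_prefix_cons.mp h
      exact List.cons_prefix_cons.mpr ⟨hab, ih h⟩

lemma mu_iter_prefix (k : ℕ) : ∀ {x y : List Bool}, mu^[k] x <+: mu^[k] y → x <+: y := by
  induction k with
  | zero => intro x y h; simpa using h
  | succ n ih =>
    intro x y h
    rw [Function.iterate_succ_apply', Function.iterate_succ_apply'] at h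
    exact ih (mu_prefix h)

/-- "starts with 01" -/
def Pp (w : List Bool) : Prop := ∃ t, w = false :: true :: t

lemma mu_Q {w} (h : Pp w) : ∃ t, mu w = false :: true :: true :: false :: t := by
  obtain ⟨t, rfl⟩ := h
  exact ⟨mu t, rfl⟩

lemma iter_P (k : ℕ) {w} (h : Pp w) : Pp (mu^[k] w) := by
  induction k with
  | zero => simpa
  | succ n ih =>
    rw [Function.iterate_succ_apply']
    obtain ⟨t, ht⟩ := mu_Q ih
    exact ⟨true :: false :: t, ht⟩

lemma iter_Q (k : ℕ) (hk : 1 ≤ k) {w} (h : Pp w) :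
    ∃ t, mu^[k] w = false :: true :: true :: false :: t := by
  obtain ⟨n, rfl⟩ := Nat.exists_eq_add_of_le hk
  rw [add_comm, Function.iterate_succ_apply']
  exact mu_Q (iter_P n h)

lemma hA : ∀ u ∈ S, ∀ v ∈ S, ∀ k : ℕ, u <+: mu^[k] v → u = mu^[k] v := by
  intro u hu v hv k h
  simp only [S, Set.mem_insert_iff, Set.mem_singleton_iff] at hu hv
  rcases hu with rfl | rfl <;> rcases hv with rfl | rfl
  · -- u = 00, v = 00
    cases k with
    | zero => simpa using h.eq_of_length (by simp)
    | succ n =>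
      rw [Function.iterate_succ_apply] at h
      obtain ⟨t, ht⟩ := iter_P n (w := mu [false, false]) ⟨_, rfl⟩
      rw [ht] at h
      simp [List.cons_prefix_cons] at h
  · -- u = 00, v = 010010
    cases k with
    | zero => revert h; decide
    | succ n =>
      rw [Function.iterate_succ_apply] at h
      obtain ⟨t, ht⟩ := iter_P n (w := mu [false, true, false, false, true, false]) ⟨_, rfl⟩
      rw [ht] at h
      simp [List.cons_prefix_cons] at h
  · -- u = 010010, v = 00
    match k with
    | 0 => revert h; decide
    | 1 =>
      exfalso
      have := h.length_le
      rw [mu_iter_len] at this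
      simp at this
    | (n+2) =>
      rw [Function.iterate_succ_apply] at h
      obtain ⟨t, ht⟩ := iter_Q (n+1) (by omega) (w := mu [false, false]) ⟨_, rfl⟩
      rw [ht] at h
      simp [List.cons_prefix_cons] at h
  · -- u = 010010, v = 010010
    cases k with
    | zero => simpa using h.eq_of_length (by simp)
    | succ n =>
      obtain ⟨t, ht⟩ := iter_Q (n+1) (by omega)
        (w := [false, true, false, false, true, false]) ⟨_, rfl⟩
      rw [ht] at h
      simp [List.cons_prefix_cons] at h

lemma hB : ∀ u ∈ S, ∀ v ∈ S, ∀ k : ℕ, 1 ≤ k → ¬ (mu^[k] u <+: v) := by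
  intro u hu v hv k hk h
  have hl := h.length_le
  rw [mu_iter_len] at hl
  simp only [S, Set.mem_insert_iff, Set.mem_singleton_iff] at hu hv
  have h2 : 2 ^ 1 ≤ 2 ^ k := Nat.pow_le_pow_right (by norm_num) hk
  rcases hu with rfl | rfl <;> rcases hv with rfl | rfl
  · simp at hl; omega
  · -- u = 00, v = 010010 : forces k = 1
    match k, hk with
    | 1, _ => revert h; decide
    | (n+2), _ =>
      have h4 : 2 ^ 2 ≤ 2 ^ (n+2) := Nat.pow_le_pow_right (by norm_num) (by omega)
      simp at hl; omega
  · simp at hl; omega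
  · simp at hl; omega

theorem no_proper_prefix :
    (∀ u ∈ S, ∀ v ∈ S, u ≠ v → ∀ k : ℕ,
      ¬ (mu^[k] v <+: u ∧ mu^[k] v ≠ u) ∧ ¬ (u <+: mu^[k] v ∧ u ≠ mu^[k] v)) ∧
    (∀ u ∈ S, ∀ v ∈ S, ∀ p q : ℕ, mu^[p] u ≠ mu^[q] v →
      ¬ (mu^[p] u <+: mu^[q] v)) := by
  constructor
  · intro u hu v hv huv k
    constructor
    · rintro ⟨h1, h2⟩
      cases k with
      | zero =>
        apply h2
        simp only [Function.iterate_zero_apply] at h1 ⊢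
        simpa using hA v hv u hu 0 (by simpa using h1)
      | succ n => exact hB v hv u hu (n+1) (by omega) h1
    · rintro ⟨h1, h2⟩
      exact h2 (hA u hu v hv k h1)
  · intro u hu v hv p q hne h
    rcases le_or_gt p q with hpq | hpq
    · obtain ⟨j, rfl⟩ := Nat.exists_eq_add_of_le hpq
      rw [Function.iterate_add_apply] at h
      have heq := hA u hu v hv j (mu_iter_prefix p h)
      exact hne (by rw [Function.iterate_add_apply, ← heq])
    · obtain ⟨j, rfl⟩ := Nat.exists_eq_add_of_lt hpq
      rw [show q + j + 1 = q + (j + 1) by omega, Function.iterate_add_apply] at h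
      exact hB u hu v hv (j+1) (by omega) (mu_iter_prefix q h)
end

section
/- The infinite word a defined as the limit of A_0 = 00, A_{n+1} = 0·μ²(A_n) is 4-automatic; specifically, a = g(h^ω(0)) where h(0)=0134, h(1)=2134, h(2)=3234, h(3)=2321, h(4)=3421 and g(0)=g(1)=g(2)=0, g(3)=g(4)=1. Equivalently, for every n ≥ 0, A_n is the prefix of g(h^{n+1}(0)) of length (4^{n+1}+3·4^n−1)/3. -/
/-- A₀ = 00, Aₙ₊₁ = 0·μ²(Aₙ). -/
def A : ℕ → List Bool
  | 0 => [false, false]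
  | n + 1 => false :: mu (mu (A n))

/-- The morphism h on {0,1,2,3,4}: h(0)=0134, h(1)=2134, h(2)=3234, h(3)=2321, h(4)=3421. -/
def hm : Fin 5 → List (Fin 5) :=
  ![[0, 1, 3, 4], [2, 1, 3, 4], [3, 2, 3, 4], [2, 3, 2, 1], [3, 4, 2, 1]]

/-- The iterates hⁿ(0). -/
def hIter : ℕ → List (Fin 5)
  | 0 => [0]
  | n + 1 => (hIter n).flatMap hm

/-- The coding g: g(0)=g(1)=g(2)=0, g(3)=g(4)=1. -/
def gc : Fin 5 → Bool := ![false, false, false, true, true]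


def Rb (c c' : Fin 5) : Bool :=
  (c.val ≤ 2 && (c' == 1 || c' == 3)) || (3 ≤ c.val && (c' == 2 || c' == 4))

abbrev Ch (w : List (Fin 5)) : Prop := List.Chain' (fun a b => Rb a b = true) w

def chB : List (Fin 5) → Bool
  | [] => true
  | [_] => true
  | a :: b :: l => Rb a b && chB (b :: l)

lemma chB_iff : ∀ w : List (Fin 5), Ch w ↔ chB w = true
  | [] => by simp [chB]; exact List.isChain_nil
  | [_] => by simp [chB]; exact List.isChain_singleton _
  | a :: b :: l => by
      rw [chB, Bool.and_eq_true]
      exact Iff.trans List.isChain_cons_cons (and_congr_right fun _ => chB_iff (b :: l))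

lemma mu_cons_s19 (x : Bool) (l : List Bool) : mu (x :: l) = x :: (!x) :: mu l := rfl

lemma mu_append (a b : List Bool) : mu (a ++ b) = mu a ++ mu b := by simp [mu]

lemma mumu_cons' (x : Bool) (l : List Bool) :
    mu (mu (x :: l)) = mu (mu [x]) ++ mu (mu l) := by
  rw [show (x :: l) = [x] ++ l from rfl, mu_append, mu_append]

lemma mumu_cons (x : Bool) (l : List Bool) :
    mu (mu (x :: l)) = x :: (!x) :: (!x) :: x :: mu (mu l) := by
  rw [mu_cons_s19, mu_cons_s19, mu_cons_s19, Bool.not_not]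

lemma mu_length : ∀ a : List Bool, (mu a).length = 2 * a.length
  | [] => rfl
  | x :: t => by rw [mu_cons_s19]; simp [mu_length t]; ring

lemma mu_ne_nil {a : List Bool} (h : a ≠ []) : mu a ≠ [] := by
  intro hn
  have := congrArg List.length hn
  rw [mu_length] at this
  exact h (List.length_eq_zero_iff.mp (by simpa using this))

lemma hm_ne_nil (c : Fin 5) : hm c ≠ [] := by fin_cases c <;> simp [hm]

lemma map_hm_ne_nil (c : Fin 5) : (hm c).map gc ≠ [] := by
  simp [hm_ne_nil c]

lemma hm_cons (c : Fin 5) : hm c = (hm c).head! :: (hm c).tail :=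
  (List.cons_head!_tail (hm_ne_nil c)).symm

lemma F1 : ∀ c : Fin 5, chB (hm c) = true := by decide

lemma F2 : ∀ c c' : Fin 5, Rb c c' = true → Rb ((hm c).getLast (hm_ne_nil c)) ((hm c').head!) = true := by
  decide

lemma P1 : ∀ c : Fin 5, ((hm c).map gc).tail = (mu (mu [gc c])).dropLast := by decide

lemma P2 : ∀ c c' : Fin 5, Rb c c' = true →
    ((hm c).map gc).tail ++ [gc ((hm c').head!)] = mu (mu [gc c]) := by decide

lemma bind_cons_hm (c : Fin 5) (l : List (Fin 5)) :
    (c :: l).flatMap hm = hm c ++ l.flatMap hm := by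
  simp

lemma chain_bind : ∀ w : List (Fin 5), Ch w → Ch (w.flatMap hm)
  | [], _ => by simp; exact List.isChain_nil
  | c :: rest, h => by
      rw [bind_cons_hm]
      have hrest : Ch rest := h.tail
      have IH := chain_bind rest hrest
      refine List.isChain_append.mpr ⟨(chB_iff _).mpr (F1 c), IH, ?_⟩
      intro x hx y hy
      cases rest with
      | nil => simp at hy
      | cons c' rest' =>
          have h1 : Rb c c' = true := (List.isChain_cons_cons.mp h).1
          rw [List.getLast?_eq_getLast (hm_ne_nil c)] at hx
          rw [Option.mem_some_iff] at hx
          rw [bind_cons_hm] at hy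
          rw [List.head?_append_of_ne_nil _ (hm_ne_nil c')] at hy
          rw [hm_cons c'] at hy
          simp only [List.head?_cons, Option.mem_some_iff] at hy
          subst hx; subst hy
          exact F2 c c' h1

lemma key : ∀ w : List (Fin 5), Ch w →
    ((w.flatMap hm).map gc).tail = (mu (mu (w.map gc))).dropLast
  | [], _ => by simp [mu]
  | [c], _ => by
      have := P1 c
      simpa using this
  | c :: c' :: rest, h => by
      have h1 : Rb c c' = true := (List.isChain_cons_cons.mp h).1
      have IH := key (c' :: rest) (List.isChain_cons_cons.mp h).2
      have e3 : (c' :: rest).flatMap hm = (hm c').head! :: ((hm c').tail ++ rest.flatMap hm) := by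
        rw [bind_cons_hm]
        conv_lhs => rw [hm_cons c']
        rfl
      rw [bind_cons_hm, List.map_append,
        List.tail_append_of_ne_nil (map_hm_ne_nil c)]
      rw [e3] at IH ⊢
      simp only [List.map_cons, List.tail_cons] at IH
      rw [List.map_cons, IH]
      have hne : mu (mu ((c' :: rest).map gc)) ≠ [] := by
        rw [List.map_cons, mumu_cons]; simp
      rw [show List.map gc (c :: c' :: rest) = gc c :: List.map gc (c' :: rest) from rfl,
        mumu_cons' (gc c), List.dropLast_append_of_ne_nil hne, ← P2 c c' h1]
      simp [List.append_assoc]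

lemma chain_hIter (n : ℕ) : Ch (hIter n) := by
  induction n with
  | zero => simp [hIter]; exact List.isChain_singleton _
  | succ n ih => exact chain_bind _ ih

lemma hIter_head : ∀ n, ∃ t, hIter n = 0 :: t
  | 0 => ⟨[], rfl⟩
  | n + 1 => by
      obtain ⟨t, ht⟩ := hIter_head n
      refine ⟨[1, 3, 4] ++ t.flatMap hm, ?_⟩
      rw [show hIter (n + 1) = (hIter n).flatMap hm from rfl, ht, bind_cons_hm]
      rfl

lemma hIter_len (n : ℕ) : (hIter n).length = 4 ^ n := by
  have key4 : ∀ l : List (Fin 5), (l.flatMap hm).length = 4 * l.length := by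
    intro l
    induction l with
    | nil => simp
    | cons c t ih =>
        rw [bind_cons_hm, List.length_append, ih]
        have : (hm c).length = 4 := by fin_cases c <;> rfl
        rw [this, List.length_cons]
        ring
  induction n with
  | zero => rfl
  | succ n ih =>
      rw [show hIter (n + 1) = (hIter n).flatMap hm from rfl, key4, ih, pow_succ]
      ring

lemma A_len (n : ℕ) : 3 * (A n).length + 1 = 4 ^ (n + 1) + 3 * 4 ^ n := by
  induction n with
  | zero => rfl
  | succ n ih =>
      have : (A (n + 1)).length = 1 + 4 * (A n).length := by
        rw [show A (n + 1) = false :: mu (mu (A n)) from rfl, List.length_cons,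
          mu_length, mu_length]
        ring
      rw [this, pow_succ (4 : ℕ) (n + 1), pow_succ (4 : ℕ) n] at *
      omega

lemma A_pref : ∀ n, A n <+: (hIter (n + 1)).map gc
  | 0 => by decide
  | n + 1 => by
      obtain ⟨s, hs⟩ := A_pref n
      have hlen : (A n).length + s.length = 4 ^ (n + 1) := by
        have := congrArg List.length hs
        simpa [hIter_len] using this
      have hA := A_len n
      have hsne : s ≠ [] := by
        intro h0
        subst h0
        rw [pow_succ] at *
        simp at hlen
        omega
      have e2 : ((hIter (n + 2)).map gc).tail
          = (mu (mu ((hIter (n + 1)).map gc))).dropLast := by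
        rw [show hIter (n + 2) = (hIter (n + 1)).flatMap hm from rfl]
        exact key _ (chain_hIter _)
      rw [← hs, mu_append, mu_append,
        List.dropLast_append_of_ne_nil (mu_ne_nil (mu_ne_nil hsne))] at e2
      obtain ⟨t, ht⟩ := hIter_head (n + 2)
      have e : (hIter (n + 2)).map gc = false :: ((hIter (n + 2)).map gc).tail := by
        rw [ht]; rfl
      refine ⟨(mu (mu s)).dropLast, ?_⟩
      show A (n + 1) ++ _ = _
      rw [show A (n + 1) = false :: mu (mu (A n)) from rfl, e, e2]
      rfl

theorem A_prefix_of_g_h (n : ℕ) :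
    A n <+: (hIter (n + 1)).map gc ∧
    (A n).length = (4 ^ (n + 1) + 3 * 4 ^ n - 1) / 3 := by
  refine ⟨A_pref n, ?_⟩
  have := A_len n
  omega
end
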